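/- arXiv:1710.08227 — 7 statements merged into one kernel-verified Lean document; each statement's English description precedes it below -/
import Mathlib

section
/- Let T : X ⇉ X be union paracontracting with x* ∈ StrFix T, and let r := sup{δ > 0 : φ(x) ⊆ φ(x*) for all x ∈ B(x*; δ)} (which is positive). Then for any ε ∈ (0, r), ‖y − x*‖ ≤ ‖x − x*‖ holds whenever x ∈ B(x*; ε) and y ∈ T(x). Consequently, if x_0 ∈ B(x*; ε) and x_{n+1} ∈ T(x_n) for all n, then x_n ∈ B(x*; ε) for all n. -/
open Filter Metric

/-- Under the union paracontracting setup with `xstar ∈ StrFix T` and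
`r = sup {δ > 0 : φ(x) ⊆ φ(xstar) on B(xstar; δ)}`, for any `ε ∈ (0, r)` one has
`‖y - xstar‖ ≤ ‖x - xstar‖` whenever `x ∈ B(xstar; ε)` and `y ∈ T x`; consequently
any iteration `x_{n+1} ∈ T(x_n)` started in `B(xstar; ε)` stays in `B(xstar; ε)`. -/
theorem stmt3 {k : ℕ} {ι : Type*} [Finite ι]
    (Ti : ι → EuclideanSpace ℝ (Fin k) → EuclideanSpace ℝ (Fin k))
    (φ : EuclideanSpace ℝ (Fin k) → Set ι)
    (hpara : ∀ i, Continuous (Ti i) ∧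
      ∀ x, Ti i x ≠ x → ∀ y, Ti i y = y → ‖Ti i x - y‖ < ‖x - y‖)
    (hne : ∀ x, (φ x).Nonempty)
    (hosc : ∀ (x : EuclideanSpace ℝ (Fin k)) (xs : ℕ → EuclideanSpace ℝ (Fin k))
        (is : ℕ → ι) (i : ι), Tendsto xs atTop (nhds x) →
        (∀ n, is n ∈ φ (xs n)) → (∀ᶠ n in atTop, is n = i) → i ∈ φ x)
    (T : EuclideanSpace ℝ (Fin k) → Set (EuclideanSpace ℝ (Fin k)))
    (hT : ∀ x, T x = {y | ∃ i ∈ φ x, y = Ti i x})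
    (xstar : EuclideanSpace ℝ (Fin k)) (hstr : T xstar = {xstar})
    (ε : ℝ) (hε0 : 0 < ε)
    (hεr : (ε : EReal) < sSup ((fun d : ℝ => (d : EReal)) ''
      {d : ℝ | 0 < d ∧ ∀ x ∈ closedBall xstar d, φ x ⊆ φ xstar})) :
    (∀ x ∈ closedBall xstar ε, ∀ y ∈ T x, ‖y - xstar‖ ≤ ‖x - xstar‖) ∧
      ∀ xs : ℕ → EuclideanSpace ℝ (Fin k), xs 0 ∈ closedBall xstar ε →
        (∀ n, xs (n + 1) ∈ T (xs n)) → ∀ n, xs n ∈ closedBall xstar ε := by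

  -- extract d > ε with the inclusion property
  obtain ⟨_, ⟨d, ⟨hd0, hdsub⟩, rfl⟩, hεd⟩ := lt_sSup_iff.mp hεr
  have hεd' : ε ≤ d := le_of_lt (by simpa using (EReal.coe_lt_coe_iff.mp hεd))
  -- fixed points of active operators at xstar
  have hfix : ∀ i ∈ φ xstar, Ti i xstar = xstar := by
    intro i hi
    have : Ti i xstar ∈ T xstar := by
      rw [hT]; exact ⟨i, hi, rfl⟩
    rw [hstr] at this; exact this
  have key : ∀ x ∈ closedBall xstar ε, ∀ y ∈ T x, ‖y - xstar‖ ≤ ‖x - xstar‖ := by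
    intro x hx y hy
    rw [hT] at hy
    obtain ⟨i, hi, rfl⟩ := hy
    have hiφ : i ∈ φ xstar := hdsub x (closedBall_subset_closedBall hεd' hx) hi
    by_cases hfx : Ti i x = x
    · rw [hfx]
    · exact le_of_lt ((hpara i).2 x hfx xstar (hfix i hiφ))
  refine ⟨key, fun xs h0 hstep n => ?_⟩
  induction n with
  | zero => exact h0
  | succ n ih =>
    rw [mem_closedBall, dist_eq_norm] at ih ⊢
    exact le_trans (key (xs n) (by rwa [mem_closedBall, dist_eq_norm]) _ (hstep n)) ih
end

section
/- (Elsner–Koltracht–Neumann) Let {T_j}_{j∈J} be a finite collection of paracontracting operators on X = ℝ^k with a common fixed point, let (j_n) be an admissible control (every j ∈ J appears infinitely often), and define z_{n+1} = T_{j_n}(z_n) from any z_0. Then (z_n) converges to a point in ⋂_{j∈J} Fix T_j. -/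
open Filter

/-- Elsner–Koltracht–Neumann: a finite family of paracontracting
operators with a common fixed point, applied with admissible control (every index
occurs infinitely often), produces a convergent sequence whose limit is a common
fixed point. -/
theorem stmt5 {k : ℕ} {J : Type*} [Finite J] [Nonempty J]
    (T : J → EuclideanSpace ℝ (Fin k) → EuclideanSpace ℝ (Fin k))
    (hpara : ∀ j, Continuous (T j) ∧
      ∀ x, T j x ≠ x → ∀ y, T j y = y → ‖T j x - y‖ < ‖x - y‖)
    (hcommon : ∃ p, ∀ j, T j p = p)
    (jc : ℕ → J) (hadm : ∀ j : J, ∀ N : ℕ, ∃ n ≥ N, jc n = j)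
    (z : ℕ → EuclideanSpace ℝ (Fin k))
    (hz : ∀ n, z (n + 1) = T (jc n) (z n)) :
    ∃ zbar, (∀ j, T j zbar = zbar) ∧ Tendsto z atTop (nhds zbar) := by
  classical
  obtain ⟨p, hp⟩ := hcommon
  -- basic nonexpansiveness towards any fixed point
  have hle : ∀ (j : J) (x y : EuclideanSpace ℝ (Fin k)), T j y = y →
      ‖T j x - y‖ ≤ ‖x - y‖ := by
    intro j x y hy
    by_cases hx : T j x = x
    · rw [hx]
    · exact le_of_lt ((hpara j).2 x hx y hy)
  set f : ℕ → ℝ := fun n => ‖z n - p‖ with hf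
  have hfanti : Antitone f := by
    apply antitone_nat_of_succ_le
    intro n
    simpa [hf, hz n] using hle (jc n) (z n) p (hp (jc n))
  have hfbdd : BddBelow (Set.range f) := by
    refine ⟨0, ?_⟩
    rintro _ ⟨n, rfl⟩
    exact norm_nonneg _
  set d : ℝ := ⨅ n, f n with hd
  have hfd : Tendsto f atTop (nhds d) := tendsto_atTop_ciInf hfanti hfbdd
  have hdle : ∀ n, d ≤ f n := fun n => ciInf_le hfbdd n
  -- compactness: extract convergent subsequence
  have hmem : ∀ n, z n ∈ Metric.closedBall p (f 0) := by
    intro n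
    rw [Metric.mem_closedBall, dist_eq_norm]
    exact hfanti (Nat.zero_le n)
  obtain ⟨zbar, -, φ, hφ, hzφ⟩ :=
    (isCompact_closedBall p (f 0)).tendsto_subseq hmem
  -- norm dist to zbar along subsequence tends to 0
  have hsub0 : Tendsto (fun i => ‖z (φ i) - zbar‖) atTop (nhds 0) := by
    have := (tendsto_iff_norm_sub_tendsto_zero.mp hzφ)
    simpa using this
  -- ‖zbar - p‖ = d
  have hzbard : ‖zbar - p‖ = d := by
    have h1 : Tendsto (fun i => f (φ i)) atTop (nhds ‖zbar - p‖) := by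
      have : Continuous fun x : EuclideanSpace ℝ (Fin k) => ‖x - p‖ :=
        (continuous_id.sub continuous_const).norm
      exact (this.continuousAt.tendsto.comp hzφ)
    have h2 : Tendsto (fun i => f (φ i)) atTop (nhds d) :=
      hfd.comp (hφ.tendsto_atTop)
    exact tendsto_nhds_unique h1 h2
  -- Main claim: zbar is a common fixed point
  have hfix : ∀ j, T j zbar = zbar := by
    by_contra hcon
    push_neg at hcon
    obtain ⟨j₀, hj₀⟩ := hcon
    -- for each i, first time ≥ φ i where the control index does not fix zbar
    have hex : ∀ i : ℕ, ∃ m, φ i ≤ m ∧ T (jc m) zbar ≠ zbar := by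
      intro i
      obtain ⟨n, hn, hjn⟩ := hadm j₀ (φ i)
      exact ⟨n, hn, by rw [hjn]; exact hj₀⟩
    set M : ℕ → ℕ := fun i => Nat.find (hex i) with hM
    have hMspec : ∀ i, φ i ≤ M i ∧ T (jc (M i)) zbar ≠ zbar :=
      fun i => Nat.find_spec (hex i)
    have hMmin : ∀ i n, φ i ≤ n → n < M i → T (jc n) zbar = zbar := by
      intro i n h1 h2
      by_contra h
      exact Nat.find_min (hex i) (by rwa [hM] at h2) ⟨h1, h⟩
    -- before M i, distance to zbar does not increase
    have hkey : ∀ i t, φ i + t ≤ M i → ‖z (φ i + t) - zbar‖ ≤ ‖z (φ i) - zbar‖ := by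
      intro i t
      induction t with
      | zero => intro _; simp
      | succ t ih =>
        intro ht
        have ht' : φ i + t ≤ M i := by omega
        have hfixn : T (jc (φ i + t)) zbar = zbar :=
          hMmin i (φ i + t) (Nat.le_add_right _ _) (by omega)
        calc ‖z (φ i + (t + 1)) - zbar‖ = ‖T (jc (φ i + t)) (z (φ i + t)) - zbar‖ := by
              rw [show φ i + (t + 1) = (φ i + t) + 1 by ring, hz]
          _ ≤ ‖z (φ i + t) - zbar‖ := hle _ _ _ hfixn
          _ ≤ ‖z (φ i) - zbar‖ := ih ht'
    have hzM0 : Tendsto (fun i => ‖z (M i) - zbar‖) atTop (nhds 0) := by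
      apply squeeze_zero (fun i => norm_nonneg _) (fun i => ?_) hsub0
      have h1 := (hMspec i).1
      have := hkey i (M i - φ i) (by omega)
      rwa [show φ i + (M i - φ i) = M i by omega] at this
    have hzM : Tendsto (fun i => z (M i)) atTop (nhds zbar) := by
      rw [tendsto_iff_norm_sub_tendsto_zero]
      exact hzM0
    -- eventually the next step drops strictly below d
    have hev : ∀ᶠ i in atTop, ∀ j : J, T j zbar ≠ zbar → ‖T j (z (M i)) - p‖ < d := by
      have hallj : ∀ j : J, T j zbar ≠ zbar → ∀ᶠ i in atTop, ‖T j (z (M i)) - p‖ < d := by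
        intro j hj
        have hlt : ‖T j zbar - p‖ < d := by
          rw [← hzbard]
          exact (hpara j).2 zbar hj p (hp j)
        have hc : Tendsto (fun i => ‖T j (z (M i)) - p‖) atTop (nhds ‖T j zbar - p‖) := by
          have hcont : Continuous fun x : EuclideanSpace ℝ (Fin k) => ‖T j x - p‖ :=
            ((hpara j).1.sub continuous_const).norm
          exact hcont.continuousAt.tendsto.comp hzM
        exact hc.eventually (eventually_lt_nhds hlt)
      haveI : Fintype J := Fintype.ofFinite J
      rw [eventually_all]
      intro j
      by_cases hj : T j zbar = zbar
      · exact Eventually.of_forall (fun i h => absurd hj h)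
      · filter_upwards [hallj j hj] with i hi _
        exact hi
    obtain ⟨i, hi⟩ := hev.exists
    have hbad : ‖z (M i + 1) - p‖ < d := by
      rw [hz]
      exact hi (jc (M i)) (hMspec i).2
    exact absurd (hdle (M i + 1)) (not_le.mpr hbad)
  -- conclude convergence of the whole sequence
  refine ⟨zbar, hfix, ?_⟩
  set g : ℕ → ℝ := fun n => ‖z n - zbar‖ with hg
  have hganti : Antitone g := by
    apply antitone_nat_of_succ_le
    intro n
    simpa [hg, hz n] using hle (jc n) (z n) zbar (hfix (jc n))
  have hg0 : Tendsto g atTop (nhds 0) := by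
    have hgbdd : BddBelow (Set.range g) := ⟨0, by rintro _ ⟨n, rfl⟩; exact norm_nonneg _⟩
    have h1 : Tendsto g atTop (nhds (⨅ n, g n)) := tendsto_atTop_ciInf hganti hgbdd
    have h2 : Tendsto (fun i => g (φ i)) atTop (nhds (⨅ n, g n)) :=
      h1.comp hφ.tendsto_atTop
    have h3 : (⨅ n, g n) = 0 := tendsto_nhds_unique h2 hsub0
    rwa [h3] at h1
  rw [tendsto_iff_norm_sub_tendsto_zero]
  exact hg0
end

section
/- Let T : X ⇉ X be union paracontracting, and suppose there exists x* ∈ StrFix T with φ(x*) = I (the whole index set). Then for any initial point x_0 ∈ X, any sequence with x_{n+1} ∈ T(x_n) for all n converges to a point x̄ ∈ Fix T. -/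
open Filter Metric

set_option maxHeartbeats 1000000

/-- Global convergence: if `T` is union paracontracting and there is a
strong fixed point `xstar` with `φ(xstar) = I` (the whole index set), then from any
initial point every iteration `x_{n+1} ∈ T(x_n)` converges to a point of `Fix T`. -/
theorem stmt6 {k : ℕ} {ι : Type*} [Finite ι]
    (Ti : ι → EuclideanSpace ℝ (Fin k) → EuclideanSpace ℝ (Fin k))
    (φ : EuclideanSpace ℝ (Fin k) → Set ι)
    (hpara : ∀ i, Continuous (Ti i) ∧
      ∀ x, Ti i x ≠ x → ∀ y, Ti i y = y → ‖Ti i x - y‖ < ‖x - y‖)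
    (hne : ∀ x, (φ x).Nonempty)
    (hosc : ∀ (x : EuclideanSpace ℝ (Fin k)) (xs : ℕ → EuclideanSpace ℝ (Fin k))
        (is : ℕ → ι) (i : ι), Tendsto xs atTop (nhds x) →
        (∀ n, is n ∈ φ (xs n)) → (∀ᶠ n in atTop, is n = i) → i ∈ φ x)
    (T : EuclideanSpace ℝ (Fin k) → Set (EuclideanSpace ℝ (Fin k)))
    (hT : ∀ x, T x = {y | ∃ i ∈ φ x, y = Ti i x})
    (xstar : EuclideanSpace ℝ (Fin k)) (hstr : T xstar = {xstar})
    (hfull : φ xstar = Set.univ)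
    (xs : ℕ → EuclideanSpace ℝ (Fin k)) (hxs : ∀ n, xs (n + 1) ∈ T (xs n)) :
    ∃ xbar, xbar ∈ T xbar ∧ Tendsto xs atTop (nhds xbar) := by
  classical
  -- choose the control sequence
  have hchoice : ∀ n, ∃ i, i ∈ φ (xs n) ∧ xs (n + 1) = Ti i (xs n) := by
    intro n
    have h := hxs n
    rw [hT] at h
    obtain ⟨i, hi, hx⟩ := h
    exact ⟨i, hi, hx⟩
  choose is his hstep using hchoice
  have hι : Nonempty ι := ⟨is 0⟩
  -- xstar is fixed by every Ti i
  have hfix : ∀ i, Ti i xstar = xstar := by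
    intro i
    have h : Ti i xstar ∈ T xstar := by
      rw [hT]
      exact ⟨i, by rw [hfull]; trivial, rfl⟩
    rw [hstr] at h
    exact h
  -- distances to xstar are antitone
  have hmono : ∀ n, ‖xs (n + 1) - xstar‖ ≤ ‖xs n - xstar‖ := by
    intro n
    rw [hstep n]
    rcases eq_or_ne (Ti (is n) (xs n)) (xs n) with h | h
    · rw [h]
    · exact le_of_lt ((hpara (is n)).2 _ h xstar (hfix _))
  set r : ℕ → ℝ := fun n => ‖xs n - xstar‖ with hr
  have hanti : Antitone r := antitone_nat_of_succ_le hmono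
  have hbdd : BddBelow (Set.range r) := ⟨0, by rintro _ ⟨n, rfl⟩; positivity⟩
  set d : ℝ := ⨅ n, r n with hdd
  have hd : Tendsto r atTop (nhds d) := tendsto_atTop_ciInf hanti hbdd
  -- the sequence stays in a compact ball
  have hball : ∀ n, xs n ∈ Metric.closedBall xstar (r 0) := by
    intro n
    rw [Metric.mem_closedBall, dist_eq_norm]
    exact hanti (Nat.zero_le n)
  have hcpt : IsCompact (Metric.closedBall xstar (r 0)) := isCompact_closedBall _ _
  -- key lemma: limits along times applying a fixed index are fixed points of that index
  have key : ∀ (i : ι) (ψ : ℕ → ℕ) (z : EuclideanSpace ℝ (Fin k)), StrictMono ψ →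
      (∀ j, is (ψ j) = i) → Tendsto (xs ∘ ψ) atTop (nhds z) → Ti i z = z := by
    intro i ψ z hψ hiψ hz
    by_contra hnz
    have hψtop : Tendsto ψ atTop atTop := hψ.tendsto_atTop
    have h1 : Tendsto (fun j => ‖xs (ψ j) - xstar‖) atTop (nhds d) := hd.comp hψtop
    have h1' : Tendsto (fun j => ‖xs (ψ j) - xstar‖) atTop (nhds ‖z - xstar‖) :=
      (hz.sub_const xstar).norm
    have hz1 : ‖z - xstar‖ = d := tendsto_nhds_unique h1' h1
    have hψtop2 : Tendsto (fun j => ψ j + 1) atTop atTop :=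
      tendsto_atTop_mono (fun j => Nat.le_succ _) hψtop
    have h2 : Tendsto (fun j => ‖xs (ψ j + 1) - xstar‖) atTop (nhds d) := hd.comp hψtop2
    have h3 : Tendsto (fun j => xs (ψ j + 1)) atTop (nhds (Ti i z)) := by
      have := ((hpara i).1.tendsto z).comp hz
      convert this using 1
      funext j
      simp [hstep, hiψ j, Function.comp]
    have hz2 : ‖Ti i z - xstar‖ = d := tendsto_nhds_unique (h3.sub_const xstar).norm h2
    have hlt := (hpara i).2 z hnz xstar (hfix i)
    rw [hz1, hz2] at hlt
    exact lt_irrefl d hlt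
  -- pick an index used infinitely often
  obtain ⟨i0, hi0⟩ := Finite.exists_infinite_fiber is
  have hi0' : ∃ᶠ n in atTop, is n = i0 := by
    rw [Nat.frequently_atTop_iff_infinite]
    rw [Set.infinite_coe_iff] at hi0
    exact hi0
  obtain ⟨ψ, hψmono, hψi⟩ := Filter.extraction_of_frequently_atTop hi0'
  obtain ⟨y, hymem, ψ2, hψ2, hconv⟩ := hcpt.tendsto_subseq (fun j => hball (ψ j))
  have hψψ2 : StrictMono (ψ ∘ ψ2) := hψmono.comp hψ2
  have hiψψ2 : ∀ j, is ((ψ ∘ ψ2) j) = i0 := fun j => hψi (ψ2 j)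
  have hconv' : Tendsto (xs ∘ (ψ ∘ ψ2)) atTop (nhds y) := hconv
  have hyfix : Ti i0 y = y := key i0 (ψ ∘ ψ2) y hψψ2 hiψψ2 hconv'
  have hyφ : i0 ∈ φ y :=
    hosc y (xs ∘ (ψ ∘ ψ2)) (is ∘ (ψ ∘ ψ2)) i0 hconv' (fun n => his _)
      (Filter.Eventually.of_forall hiψψ2)
  have hyT : y ∈ T y := by
    rw [hT]
    exact ⟨i0, hyφ, hyfix.symm⟩
  refine ⟨y, hyT, ?_⟩
  -- for each "bad" index, the bad visits near y are finitely many
  have hEps : ∀ i : ι, ∃ ε : ℝ, 0 < ε ∧ (Ti i y ≠ y →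
      {n | is n = i ∧ ‖xs n - y‖ ≤ ε}.Finite) := by
    intro i
    by_cases hgood : Ti i y = y
    · exact ⟨1, one_pos, fun h => absurd hgood h⟩
    · -- fixed point set of Ti i is closed and misses a ball around y
      have hclosed : IsClosed {z | Ti i z = z} := isClosed_eq (hpara i).1 continuous_id
      have hyopen : y ∈ {z | Ti i z = z}ᶜ := hgood
      obtain ⟨ε, hε, hball'⟩ := Metric.isOpen_iff.mp hclosed.isOpen_compl y hyopen
      refine ⟨ε / 2, by linarith, fun _ => ?_⟩
      by_contra hinf
      have hfreq : ∃ᶠ n in atTop, is n = i ∧ ‖xs n - y‖ ≤ ε / 2 :=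
        Nat.frequently_atTop_iff_infinite.mpr hinf
      obtain ⟨ψ', hψ'mono, hψ'p⟩ := Filter.extraction_of_frequently_atTop hfreq
      obtain ⟨z, hzmem, ψ2', hψ2', hconvz⟩ := hcpt.tendsto_subseq (fun j => hball (ψ' j))
      have hzfix : Ti i z = z :=
        key i (ψ' ∘ ψ2') z (hψ'mono.comp hψ2') (fun j => (hψ'p (ψ2' j)).1) hconvz
      have hznear : ‖z - y‖ ≤ ε / 2 := by
        have hlim : Tendsto (fun j => ‖xs ((ψ' ∘ ψ2') j) - y‖) atTop (nhds ‖z - y‖) :=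
          (hconvz.sub_const y).norm
        exact le_of_tendsto hlim (Filter.Eventually.of_forall fun j => (hψ'p (ψ2' j)).2)
      have : z ∈ Metric.ball y ε := by
        rw [Metric.mem_ball, dist_eq_norm]
        linarith
      exact hball' this hzfix
  choose eps heps hepsfin using hEps
  -- the global minimum of eps over bad indices
  have := Fintype.ofFinite ι
  set ε0 : ℝ := Finset.univ.inf' (Finset.univ_nonempty) eps with hε0
  have hε0pos : 0 < ε0 := by
    rw [hε0, Finset.lt_inf'_iff]
    exact fun i _ => heps i
  have hε0le : ∀ i, ε0 ≤ eps i := fun i => Finset.inf'_le _ (Finset.mem_univ i)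
  -- the set of bad times is finite
  set Bad : Set ℕ := ⋃ i : ι, if Ti i y = y then (∅ : Set ℕ)
      else {n | is n = i ∧ ‖xs n - y‖ ≤ eps i} with hBad
  have hBadfin : Bad.Finite := by
    apply Set.finite_iUnion
    intro i
    by_cases h : Ti i y = y
    · simp [h]
    · simpa [h] using hepsfin i h
  obtain ⟨N0, hN0⟩ := hBadfin.bddAbove
  -- eventually, steps near y do not increase the distance to y
  have hstepy : ∀ n, n > N0 → ‖xs n - y‖ < ε0 → ‖xs (n + 1) - y‖ ≤ ‖xs n - y‖ := by
    intro n hn hnear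
    by_cases hgood : Ti (is n) y = y
    · rw [hstep n]
      rcases eq_or_ne (Ti (is n) (xs n)) (xs n) with h | h
      · rw [h]
      · exact le_of_lt ((hpara (is n)).2 _ h y hgood)
    · exfalso
      have hnBad : n ∈ Bad := by
        rw [hBad]
        refine Set.mem_iUnion.mpr ⟨is n, ?_⟩
        rw [if_neg hgood]
        exact ⟨rfl, le_trans hnear.le (hε0le (is n))⟩
      exact absurd (hN0 hnBad) (not_le.mpr hn)
  -- conclude convergence: the sequence gets trapped in any small ball around y
  rw [Metric.tendsto_atTop]
  intro δ hδ
  set ρ : ℝ := min δ ε0 with hρ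
  have hρpos : 0 < ρ := lt_min hδ hε0pos
  -- find a time past N0 where xs is within ρ of y
  have hfreqnear : ∃ n, n > N0 ∧ ‖xs n - y‖ < ρ := by
    have htop : Tendsto (ψ ∘ ψ2) atTop atTop := hψψ2.tendsto_atTop
    have hev1 : ∀ᶠ j in atTop, (ψ ∘ ψ2) j > N0 := htop.eventually_gt_atTop N0
    have hev2 : ∀ᶠ j in atTop, ‖(xs ∘ (ψ ∘ ψ2)) j - y‖ < ρ := by
      have := (hconv'.sub_const y).norm
      simpa using this.eventually (gt_mem_nhds (by simpa using hρpos))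
    obtain ⟨j, h1, h2⟩ := (hev1.and hev2).exists
    exact ⟨(ψ ∘ ψ2) j, h1, h2⟩
  obtain ⟨n0, hn0, hn0near⟩ := hfreqnear
  have htrap : ∀ m, ‖xs (n0 + m) - y‖ < ρ := by
    intro m
    induction m with
    | zero => simpa using hn0near
    | succ m ih =>
      have hgt : n0 + m > N0 := lt_of_lt_of_le hn0 (Nat.le_add_right _ _)
      have hlt : ‖xs (n0 + m) - y‖ < ε0 := lt_of_lt_of_le ih (min_le_right δ ε0)
      calc ‖xs (n0 + m + 1) - y‖ ≤ ‖xs (n0 + m) - y‖ := hstepy _ hgt hlt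
        _ < ρ := ih
  refine ⟨n0, fun n hn => ?_⟩
  rw [dist_eq_norm]
  obtain ⟨m, rfl⟩ := Nat.exists_eq_add_of_le hn
  exact lt_of_lt_of_le (htrap m) (min_le_left δ ε0)
end

section
/- Let T be the forward-backward operator T(x) = P_A(x − γ∇f(x)) for sparsity-constrained minimization min{f(x) : ‖x‖_0 ≤ s}, with representation T(x) = {(P_{A_I}∘Q)(x) : I ∈ φ(Q(x))}. If x ∈ Fix T, then there exists I ∈ φ(Q(x)) with x ∈ argmin_{z ∈ A_I} f(z), and moreover min_{i∈I} |x_i| ≥ γ‖∇f(x)‖_∞. -/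
/-- Coordinatewise projector onto the subspace of vectors supported on `I`. -/
noncomputable def proj {k : ℕ} (I : Finset (Fin k))
    (x : EuclideanSpace ℝ (Fin k)) : EuclideanSpace ℝ (Fin k) :=
  WithLp.toLp 2 (fun i => if i ∈ I then x i else 0)

/-- `I` is an active (nearest) `s`-subset for the point `y`: `P_{A_I} y` realises the
distance from `y` to `A = ⋃_{J card s} A_J`. -/
def activeSel {k : ℕ} (s : ℕ) (I : Finset (Fin k)) (y : EuclideanSpace ℝ (Fin k)) : Prop :=
  I.card = s ∧ ∀ J : Finset (Fin k), J.card = s → ‖y - proj I y‖ ≤ ‖y - proj J y‖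

lemma grad_ineq {k : ℕ} (f : EuclideanSpace ℝ (Fin k) → ℝ) (hconv : ConvexOn ℝ Set.univ f)
    (hdiff : Differentiable ℝ f) (x z : EuclideanSpace ℝ (Fin k))
    (h0 : (inner ℝ (gradient f x) (z - x) : ℝ) = 0) : f x ≤ f z := by
  set g : ℝ → ℝ := fun t => f (t • (z - x) + x) with hg
  have hgc : ConvexOn ℝ Set.univ g := by
    have := hconv.comp_affineMap (AffineMap.lineMap x z)
    simp only [Set.preimage_univ] at this
    have e : g = f ∘ AffineMap.lineMap x z := by
      funext t; simp [hg, AffineMap.lineMap_apply, vsub_eq_sub, vadd_eq_add]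
    rw [e]; exact this
  have hline : HasDerivAt (fun t : ℝ => t • (z - x) + x) (z - x) 0 := by
    simpa using ((hasDerivAt_id (0:ℝ)).smul_const (z - x)).add_const x
  have hfd : HasFDerivAt f (InnerProductSpace.toDual ℝ _ (gradient f x)) x :=
    ((hdiff x).hasGradientAt).hasFDerivAt
  have hgd : HasDerivAt g ((inner ℝ (gradient f x) (z - x) : ℝ)) 0 := by
    have hfd' : HasFDerivAt f (InnerProductSpace.toDual ℝ _ (gradient f x)) ((0:ℝ) • (z - x) + x) := by
      simpa using hfd
    have := hfd'.comp_hasDerivAt 0 hline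
    exact this.congr_deriv (by simp [InnerProductSpace.toDual_apply_apply])
  rw [h0] at hgd
  have := hgc.le_slope_of_hasDerivAt (Set.mem_univ 0) (Set.mem_univ 1) zero_lt_one hgd
  simp [slope, hg] at this
  linarith

/-- If `x` is a fixed point of the forward-backward operator
`T(x) = {P_{A_I}(Q x) : I ∈ φ(Q x)}`, `Q = Id - γ∇f`, then there is `I ∈ φ(Q x)` with
`x ∈ argmin_{A_I} f` and `min_{i∈I} |x_i| ≥ γ‖∇f(x)‖_∞`. -/
theorem stmt12 {k s : ℕ} (f : EuclideanSpace ℝ (Fin k) → ℝ)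
    (hconv : ConvexOn ℝ Set.univ f) (hdiff : Differentiable ℝ f)
    (γ : ℝ) (hγ : 0 < γ)
    (x : EuclideanSpace ℝ (Fin k))
    (hfix : ∃ I : Finset (Fin k), activeSel s I (x - γ • gradient f x) ∧
      x = proj I (x - γ • gradient f x)) :
    ∃ I : Finset (Fin k), activeSel s I (x - γ • gradient f x) ∧
      (∀ i ∉ I, x i = 0) ∧
      (∀ z : EuclideanSpace ℝ (Fin k), (∀ i ∉ I, z i = 0) → f x ≤ f z) ∧
      ∀ i ∈ I, ∀ j, γ * |gradient f x j| ≤ |x i| := by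
  obtain ⟨I, hact, hx⟩ := hfix
  set y : EuclideanSpace ℝ (Fin k) := x - γ • gradient f x with hy
  have hyap : ∀ m, y m = x m - γ * gradient f x m := by
    intro m; simp [hy]
  have hxap : ∀ m, x m = if m ∈ I then y m else 0 := by
    intro m; conv_lhs => rw [hx]
    rfl
  have hsupp : ∀ m, m ∉ I → x m = 0 := by
    intro m hm; rw [hxap m, if_neg hm]
  have hgrad0 : ∀ m ∈ I, gradient f x m = 0 := by
    intro m hm
    have := hxap m
    rw [if_pos hm, hyap m] at this
    have hγm : γ * gradient f x m = 0 := by linarith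
    rcases mul_eq_zero.1 hγm with h | h
    · exact absurd h (ne_of_gt hγ)
    · exact h
  have hyI : ∀ m ∈ I, y m = x m := by
    intro m hm; rw [hyap m, hgrad0 m hm]; ring
  have hyN : ∀ m, m ∉ I → y m = -(γ * gradient f x m) := by
    intro m hm; rw [hyap m, hsupp m hm]; ring
  refine ⟨I, hact, hsupp, ?_, ?_⟩
  · -- minimality
    intro z hz
    apply grad_ineq f hconv hdiff x z
    rw [PiLp.inner_apply]
    apply Finset.sum_eq_zero
    intro m _
    by_cases hm : m ∈ I
    · simp [hgrad0 m hm]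
    · simp [hz m hm, hsupp m hm]
  · -- min |x_i| ≥ γ |grad_j|
    intro i hi j
    by_cases hj : j ∈ I
    · rw [hgrad0 j hj]
      simpa using abs_nonneg (x i)
    · have hij : i ≠ j := fun h => hj (h ▸ hi)
      set J : Finset (Fin k) := insert j (I.erase i) with hJ
      have hjJ : j ∈ J := Finset.mem_insert_self _ _
      have hiJ : i ∉ J := by
        simp [hJ, Finset.mem_insert, Finset.mem_erase, hij]
      have hcard : J.card = s := by
        rw [hJ, Finset.card_insert_of_notMem (fun h => hj (Finset.mem_of_mem_erase h)),
          Finset.card_erase_of_mem hi]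
        have h1 : 1 ≤ I.card := Finset.card_pos.2 ⟨i, hi⟩
        have h2 := hact.1
        omega
      have hle := hact.2 J hcard
      have hsq : ∑ m, (y - proj I y) m ^ 2 ≤ ∑ m, (y - proj J y) m ^ 2 := by
        have hn : ∀ K : Finset (Fin k), ‖y - proj K y‖ ^ 2 = ∑ m, (y - proj K y) m ^ 2 := by
          intro K
          rw [EuclideanSpace.norm_eq, Real.sq_sqrt (by positivity)]
          exact Finset.sum_congr rfl fun m _ => by rw [Real.norm_eq_abs, sq_abs]
        rw [← hn I, ← hn J]
        exact pow_le_pow_left₀ (norm_nonneg _) hle 2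
      have happ : ∀ (K : Finset (Fin k)) m, (y - proj K y) m = if m ∈ K then 0 else y m := by
        intro K m
        by_cases hm : m ∈ K <;> simp [proj, hm, PiLp.sub_apply]
      have hkey : ∀ m : Fin k,
          (y - proj I y) m ^ 2 + (if m = i then y i ^ 2 else 0)
          = (y - proj J y) m ^ 2 + (if m = j then y j ^ 2 else 0) := by
        intro m
        rw [happ I m, happ J m]
        by_cases hmi : m = i
        · subst hmi
          rw [if_pos hi, if_neg hiJ, if_pos rfl, if_neg hij]
          ring
        · by_cases hmj : m = j
          · subst hmj
            rw [if_neg hj, if_pos hjJ, if_neg hmi, if_pos rfl]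
            ring
          · have : m ∈ J ↔ m ∈ I := by
              simp [hJ, Finset.mem_insert, Finset.mem_erase, hmj, hmi]
            rw [if_neg hmi, if_neg hmj, if_congr this rfl rfl]
      have hsum : ∑ m, (y - proj I y) m ^ 2 + y i ^ 2
          = ∑ m, (y - proj J y) m ^ 2 + y j ^ 2 := by
        have := Finset.sum_congr rfl (fun m (_ : m ∈ Finset.univ) => hkey m)
        rwa [Finset.sum_add_distrib, Finset.sum_add_distrib,
          Finset.sum_ite_eq' Finset.univ i (fun _ => y i ^ 2),
          Finset.sum_ite_eq' Finset.univ j (fun _ => y j ^ 2),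
          if_pos (Finset.mem_univ i), if_pos (Finset.mem_univ j)] at this
      have hyy : y j ^ 2 ≤ y i ^ 2 := by linarith
      have hvals : (γ * gradient f x j) ^ 2 ≤ x i ^ 2 := by
        rw [← hyI i hi]
        calc (γ * gradient f x j) ^ 2 = y j ^ 2 := by rw [hyN j hj]; ring
        _ ≤ y i ^ 2 := hyy
      have := Real.sqrt_le_sqrt hvals
      rw [Real.sqrt_sq_eq_abs, Real.sqrt_sq_eq_abs, abs_mul, abs_of_pos hγ] at this
      exact this
end

section
/- Let x be a fixed point of the forward-backward operator for min{f(x) : ‖x‖_0 ≤ s} with ‖x‖_0 < s. Then ∇f(x) = 0 and x is a global minimizer of f over {z : ‖z‖_0 ≤ s}. -/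
/-- If `x` is a fixed point of the forward-backward operator
`T(x) = P_A(x - γ∇f(x))`, `A = {z : ‖z‖₀ ≤ s}`, with `‖x‖₀ < s`, then `∇f(x) = 0`
and `x` is a global minimiser of `f` over `A`. -/
theorem stmt13 {k s : ℕ} (f : EuclideanSpace ℝ (Fin k) → ℝ)
    (hconv : ConvexOn ℝ Set.univ f) (hdiff : Differentiable ℝ f)
    (γ : ℝ) (hγ : 0 < γ)
    (x : EuclideanSpace ℝ (Fin k))
    (hfix : {i | x i ≠ 0}.ncard ≤ s ∧
      ∀ z : EuclideanSpace ℝ (Fin k), {i | z i ≠ 0}.ncard ≤ s →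
        ‖(x - γ • gradient f x) - x‖ ≤ ‖(x - γ • gradient f x) - z‖)
    (hlt : {i | x i ≠ 0}.ncard < s) :
    gradient f x = 0 ∧
      ∀ z : EuclideanSpace ℝ (Fin k), {i | z i ≠ 0}.ncard ≤ s → f x ≤ f z := by
  set g := gradient f x with hg
  have hgrad0 : g = 0 := by
    ext j
    -- build the competitor z
    set z : EuclideanSpace ℝ (Fin k) := WithLp.toLp 2 (fun i => if i = j then x i - γ * g i else x i) with hzdef
    have hsub : {i | z i ≠ 0} ⊆ insert j {i | x i ≠ 0} := by
      intro i hi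
      by_cases h : i = j
      · rw [h]; exact Set.mem_insert _ _
      · refine Set.mem_insert_of_mem _ ?_
        simpa [hzdef, h] using hi
    have hzcard : {i | z i ≠ 0}.ncard ≤ s := by
      have h1 : {i | z i ≠ 0}.ncard ≤ (insert j {i | x i ≠ 0}).ncard :=
        Set.ncard_le_ncard hsub (Set.toFinite _)
      have h2 : (insert j {i | x i ≠ 0}).ncard ≤ {i | x i ≠ 0}.ncard + 1 :=
        Set.ncard_insert_le _ _
      omega
    have hle := hfix.2 z hzcard
    have hA : ‖(x - γ • g) - x‖ = Real.sqrt (∑ i, (γ * g i) ^ 2) := by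
      rw [EuclideanSpace.norm_eq]
      congr 1
      apply Finset.sum_congr rfl
      intro i _
      simp only [PiLp.sub_apply, PiLp.smul_apply, smul_eq_mul, Real.norm_eq_abs, sq_abs]
      ring
    have hB : ‖(x - γ • g) - z‖ = Real.sqrt (∑ i, if i = j then 0 else (γ * g i) ^ 2) := by
      rw [EuclideanSpace.norm_eq]
      congr 1
      apply Finset.sum_congr rfl
      intro i _
      by_cases h : i = j
      · simp [hzdef, h]
      · simp only [hzdef, if_neg h, PiLp.sub_apply, PiLp.smul_apply, smul_eq_mul,
          Real.norm_eq_abs, sq_abs]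
        ring
    rw [hA, hB] at hle
    have hsum : (∑ i, (γ * g i) ^ 2) ≤ ∑ i, if i = j then 0 else (γ * g i) ^ 2 := by
      have h0 : (0:ℝ) ≤ ∑ i, (γ * g i) ^ 2 :=
        Finset.sum_nonneg fun i _ => sq_nonneg _
      have h1 : (0:ℝ) ≤ ∑ i, if i = j then 0 else (γ * g i) ^ 2 :=
        Finset.sum_nonneg fun i _ => by positivity
      calc (∑ i, (γ * g i) ^ 2) = Real.sqrt (∑ i, (γ * g i) ^ 2) ^ 2 := (Real.sq_sqrt h0).symm
        _ ≤ Real.sqrt (∑ i, if i = j then 0 else (γ * g i) ^ 2) ^ 2 := by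
            apply pow_le_pow_left₀ (Real.sqrt_nonneg _) hle
        _ = _ := Real.sq_sqrt h1
    have hdiffsum : ∑ i, (γ * g i) ^ 2 - (∑ i, if i = j then 0 else (γ * g i) ^ 2)
        = (γ * g j) ^ 2 := by
      rw [← Finset.sum_sub_distrib]
      rw [Finset.sum_eq_single j]
      · simp
      · intro i _ h; simp [h]
      · intro h; simp at h
    have : (γ * g j) ^ 2 ≤ 0 := by linarith
    have : γ * g j = 0 := by nlinarith [sq_nonneg (γ * g j)]
    have := mul_eq_zero.1 this
    rcases this with h | h
    · exact absurd h (ne_of_gt hγ)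
    · simpa using h
  refine ⟨hgrad0, fun z _ => ?_⟩
  -- first order condition ⇒ global min
  have hfd : fderiv ℝ f x = 0 := by
    have : gradient f x = 0 := hgrad0
    rw [gradient] at this
    have := congrArg (InnerProductSpace.toDual ℝ (EuclideanSpace ℝ (Fin k))) this
    simpa using this
  by_cases hzx : z = x
  · simp [hzx]
  -- φ t = f (x + t • (z - x))
  set φ : ℝ → ℝ := fun t => f (AffineMap.lineMap x z t) with hφ
  have hφconv : ConvexOn ℝ Set.univ φ := by
    have := hconv.comp_affineMap (AffineMap.lineMap x z (k := ℝ))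
    exact this
  have hline : ∀ t : ℝ, HasDerivAt (fun t : ℝ => AffineMap.lineMap x z t) (z - x) t := by
    intro t
    simp only [AffineMap.lineMap_apply_module]
    have ha : HasDerivAt (fun t : ℝ => t • x) x t := by
      simpa using (hasDerivAt_id t).smul_const x
    have hb : HasDerivAt (fun t : ℝ => t • z) z t := by
      simpa using (hasDerivAt_id t).smul_const z
    have h1 : HasDerivAt (fun t : ℝ => x - t • x + t • z) (-x + z) t :=
      (ha.const_sub x).add hb
    have heq : (fun t : ℝ => (1 - t) • x + t • z) = fun t : ℝ => x - t • x + t • z := by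
      funext t; rw [sub_smul, one_smul]
    have hzx' : z - x = -x + z := by abel
    rw [heq, hzx']
    exact h1
  have hφderiv : HasDerivAt φ 0 0 := by
    have hx0 : (AffineMap.lineMap x z : ℝ → EuclideanSpace ℝ (Fin k)) 0 = x := by
      simp
    have hF : HasFDerivAt f (fderiv ℝ f x) (AffineMap.lineMap x z (0:ℝ)) := by
      rw [hx0]; exact (hdiff x).hasFDerivAt
    have := hF.comp_hasDerivAt (0:ℝ) (hline 0)
    simp only [hfd, ContinuousLinearMap.zero_apply] at this
    exact this
  have hslope := hφconv.le_slope_of_hasDerivAt (Set.mem_univ (0:ℝ)) (Set.mem_univ (1:ℝ))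
    one_pos hφderiv
  have hφ0 : φ 0 = f x := by simp [hφ]
  have hφ1 : φ 1 = f z := by simp [hφ]
  rw [slope_def_field] at hslope
  simp [hφ0, hφ1] at hslope
  linarith
end

section
/- Every fixed point x of the forward-backward operator T(x) = P_A(x − γ∇f(x)) for min{f(x) : ‖x‖_0 ≤ s} is a local minimizer of f over A = {z : ‖z‖_0 ≤ s}. -/
open Set Filter Topology

lemma convex_grad_ineq {E : Type*} [NormedAddCommGroup E] [InnerProductSpace ℝ E]
    [CompleteSpace E] (f : E → ℝ) (hconv : ConvexOn ℝ Set.univ f)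
    (hdiff : Differentiable ℝ f) (x z : E) :
    f x + inner ℝ (gradient f x) (z - x) ≤ f z := by
  set v := z - x with hv
  set g := gradient f x with hg
  have hline : HasDerivAt (fun t : ℝ => x + t • v) v 0 := by
    simpa using ((hasDerivAt_id (0:ℝ)).smul_const v).const_add x
  have hgrad : HasGradientAt f g x := (hdiff x).hasGradientAt
  have hF : HasFDerivAt f ((InnerProductSpace.toDual ℝ E) g) x :=
    hasGradientAt_iff_hasFDerivAt.mp hgrad
  have hF' : HasFDerivAt f ((InnerProductSpace.toDual ℝ E) g) (x + (0:ℝ) • v) := by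
    simpa using hF
  have hφ : HasDerivAt (fun t : ℝ => f (x + t • v)) (inner ℝ g v : ℝ) 0 := by
    have := hF'.comp_hasDerivAt (0:ℝ) hline
    simp at this; exact this
  have hslope : Tendsto (slope (fun t : ℝ => f (x + t • v)) 0) (𝓝[>] 0)
      (𝓝 (inner ℝ g v : ℝ)) :=
    (hasDerivAt_iff_tendsto_slope.mp hφ).mono_left
      (nhdsWithin_mono _ (fun t ht => ne_of_gt ht))
  have hbound : ∀ᶠ t in 𝓝[>] (0:ℝ), slope (fun t : ℝ => f (x + t • v)) 0 t ≤ f z - f x := by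
    filter_upwards [Ioo_mem_nhdsGT_of_mem (by norm_num : (0:ℝ) ∈ Ico (0:ℝ) 1)] with t ht
    have ht0 : 0 < t := ht.1
    have ht1 : t < 1 := ht.2
    have hcc : f (x + t • v) ≤ (1 - t) * f x + t * f z := by
      have := hconv.2 (mem_univ x) (mem_univ z) (by linarith : (0:ℝ) ≤ 1 - t)
        (le_of_lt ht0) (by ring)
      have hxz : (1 - t) • x + t • z = x + t • v := by
        simp [hv, smul_sub]; module
      simpa [hxz] using this
    rw [slope_def_field, sub_zero, div_le_iff₀ ht0]
    simp only [zero_smul, add_zero]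
    nlinarith
  have : (inner ℝ g v : ℝ) ≤ f z - f x := le_of_tendsto hslope hbound
  linarith

/-- Every fixed point `x` of the forward-backward operator
`T(x) = P_A(x - γ∇f(x))` for `min {f(x) : ‖x‖₀ ≤ s}` is a local minimiser of `f`
over `A = {z : ‖z‖₀ ≤ s}`. -/
theorem stmt15 {k s : ℕ} (f : EuclideanSpace ℝ (Fin k) → ℝ)
    (hconv : ConvexOn ℝ Set.univ f) (hdiff : Differentiable ℝ f)
    (L : NNReal) (hL : 0 < (L : ℝ)) (hlip : LipschitzWith L (gradient f))
    (γ : ℝ) (hγ0 : 0 < γ) (hγ2 : γ < 2 / L)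
    (x : EuclideanSpace ℝ (Fin k))
    (hfix : {i | x i ≠ 0}.ncard ≤ s ∧
      ∀ z : EuclideanSpace ℝ (Fin k), {i | z i ≠ 0}.ncard ≤ s →
        ‖(x - γ • gradient f x) - x‖ ≤ ‖(x - γ • gradient f x) - z‖) :
    ∃ δ > (0 : ℝ), ∀ z : EuclideanSpace ℝ (Fin k),
      {i | z i ≠ 0}.ncard ≤ s → ‖z - x‖ ≤ δ → f x ≤ f z := by
  obtain ⟨hS, hproj⟩ := hfix
  set g := gradient f x with hg
  set S := {i | x i ≠ 0} with hSdef
  -- key: gradient vanishes on permissible directions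
  have key : ∀ i : Fin k, (insert i S).ncard ≤ s → g i = 0 := by
    intro i hi
    set b : EuclideanSpace ℝ (Fin k) := (γ * g i) • EuclideanSpace.single i (1:ℝ) with hb
    have hzsupp : {j | (x - b) j ≠ 0} ⊆ insert i S := by
      intro j hj
      by_contra hji
      simp only [mem_insert_iff, hSdef, mem_setOf_eq, not_or, not_not] at hji
      apply hj
      have hbi : b j = 0 := by
        simp [hb, EuclideanSpace.single_apply, hji.1]
      simp only [PiLp.sub_apply, hji.2, hbi, sub_zero, ne_eq, not_not]
    have hzcard : {j | (x - b) j ≠ 0}.ncard ≤ s :=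
      le_trans (Set.ncard_le_ncard hzsupp (Set.toFinite _)) hi
    have h1 := hproj (x - b) hzcard
    have hLHS : ‖(x - γ • g) - x‖ = ‖γ • g‖ := by
      rw [show (x - γ • g) - x = -(γ • g) by abel, norm_neg]
    have hRHS : (x - γ • g) - (x - b) = b - γ • g := by abel
    rw [hLHS, hRHS] at h1
    have hsq : ‖γ • g‖ ^ 2 ≤ ‖b - γ • g‖ ^ 2 :=
      pow_le_pow_left₀ (norm_nonneg _) h1 2
    have hinner : (inner ℝ b (γ • g) : ℝ) = γ ^ 2 * (g i) ^ 2 := by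
      rw [hb, real_inner_smul_left, real_inner_smul_right,
        EuclideanSpace.inner_single_left]
      simp; ring
    have hnb : ‖b‖ ^ 2 = γ ^ 2 * (g i) ^ 2 := by
      rw [hb, norm_smul]
      simp [EuclideanSpace.norm_single, mul_pow, sq_abs]
    rw [norm_sub_sq_real, hinner, hnb] at hsq
    have h4 : γ ^ 2 * (g i) ^ 2 ≤ 0 := by nlinarith
    have hγ2' : 0 < γ ^ 2 := by positivity
    have h5 : (g i) ^ 2 ≤ 0 := by nlinarith [sq_nonneg (g i)]
    have h6 : (g i) ^ 2 = 0 := le_antisymm h5 (sq_nonneg _)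
    exact pow_eq_zero_iff two_ne_zero |>.mp h6
  by_cases hlt : S.ncard < s
  · -- gradient is zero, x is a global minimizer
    have hg0 : g = 0 := by
      ext i
      have : (insert i S).ncard ≤ s :=
        le_trans (Set.ncard_insert_le i S) (by omega)
      simpa using key i this
    refine ⟨1, one_pos, fun z _ _ => ?_⟩
    have := convex_grad_ineq f hconv hdiff x z
    rw [← hg, hg0] at this
    simpa using this
  · have hScard : S.ncard = s := le_antisymm hS (not_lt.mp hlt)
    have hgS : ∀ i ∈ S, g i = 0 := fun i hi =>
      key i (by rw [Set.insert_eq_self.mpr hi, hScard])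
    have hSfin : S.Finite := Set.toFinite _
    by_cases hSe : S = ∅
    · -- x = 0 and s = 0, only z = x is admissible
      refine ⟨1, one_pos, fun z hz _ => ?_⟩
      have hs0 : s = 0 := by rw [← hScard, hSe, Set.ncard_empty]
      have hze : {i | z i ≠ 0} = ∅ := by
        rw [← Set.ncard_eq_zero (Set.toFinite _)]; omega
      have hzx : z = x := by
        ext i
        have hzi : z i = 0 := by
          by_contra h; have h' : i ∈ {i | z i ≠ 0} := h; rw [hze] at h'; exact Set.notMem_empty i h'
        have hxi : x i = 0 := by
          by_contra h; exact absurd ((hSe ▸ (h : i ∈ S)) : (i ∈ (∅:Set (Fin k)))) (Set.notMem_empty i)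
        rw [hzi, hxi]
      rw [hzx]
    · -- choose δ smaller than the least |x i| on the support
      have hTne : hSfin.toFinset.Nonempty := by
        rw [Set.Finite.toFinset_nonempty]; exact Set.nonempty_iff_ne_empty.mpr hSe
      set m := hSfin.toFinset.inf' hTne (fun i => |x i|) with hm
      have hm0 : 0 < m := by
        rw [hm, Finset.lt_inf'_iff]
        intro i hi
        rw [Set.Finite.mem_toFinset] at hi
        exact abs_pos.mpr hi
      refine ⟨m / 2, by linarith, fun z hz hdist => ?_⟩
      -- support of z equals support of x
      have hsub : S ⊆ {i | z i ≠ 0} := by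
        intro i hi
        have h1 : |(z - x) i| ≤ ‖z - x‖ := by
          have := abs_real_inner_le_norm (EuclideanSpace.single i (1:ℝ)) (z - x)
          rwa [EuclideanSpace.inner_single_left, EuclideanSpace.norm_single,
            map_one, one_mul, norm_one, one_mul] at this
        have h2 : |z i - x i| ≤ m / 2 := by
          rw [show z i - x i = (z - x) i by simp]
          exact le_trans h1 hdist
        have h3 : m ≤ |x i| :=
          Finset.inf'_le _ (Set.Finite.mem_toFinset hSfin |>.mpr hi)
        intro hzi
        rw [hzi, zero_sub, abs_neg] at h2
        linarith
      have hzfin : {i | z i ≠ 0}.Finite := Set.toFinite _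
      have hSeq : S = {i | z i ≠ 0} :=
        Set.eq_of_subset_of_ncard_le hsub (by rw [hScard]; exact hz) hzfin
      -- gradient orthogonal to z - x
      have hinner0 : (inner ℝ g (z - x) : ℝ) = 0 := by
        rw [PiLp.inner_apply]
        apply Finset.sum_eq_zero
        intro i _
        by_cases hi : i ∈ S
        · simp [hgS i hi]
        · have hxi : x i = 0 := by simpa [hSdef] using hi
          have hzi : z i = 0 := by
            have := hSeq ▸ hi
            simpa using this
          simp [hxi, hzi]
      have := convex_grad_ineq f hconv hdiff x z
      rw [← hg, hinner0] at this
      linarith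
end

section
/- Let x be a fixed point of the forward-backward operator T for min{f(x) : ‖x‖_0 ≤ s}. If either ∇f(x) = 0, or σ_s(x) > γ‖∇f(x)‖_∞ (where σ_s(x) is the s-th largest entry of x in magnitude), then x is a strong fixed point: T(x) = {x}. -/
lemma normsq_eq {k : ℕ} (v : EuclideanSpace ℝ (Fin k)) : ‖v‖ ^ 2 = ∑ i, (v i) ^ 2 := by
  rw [EuclideanSpace.norm_eq, Real.sq_sqrt (by positivity)]
  simp [Real.norm_eq_abs, sq_abs]

/-- Let `x` be a fixed point of the forward-backward operator
`T(y) = P_A(y - γ∇f(y))`, `A = {z : ‖z‖₀ ≤ s}`. If either `∇f(x) = 0` or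
`σ_s(x) > γ‖∇f(x)‖_∞` (there are `s` coordinates of `x` whose magnitude strictly
exceeds `γ‖∇f(x)‖_∞`), then `x` is a strong fixed point: `T(x) = {x}`. -/
theorem stmt16 {k s : ℕ} (f : EuclideanSpace ℝ (Fin k) → ℝ)
    (hconv : ConvexOn ℝ Set.univ f) (hdiff : Differentiable ℝ f)
    (γ : ℝ) (hγ : 0 < γ)
    (T : EuclideanSpace ℝ (Fin k) → Set (EuclideanSpace ℝ (Fin k)))
    (hT : ∀ y, T y = {z | {i | z i ≠ 0}.ncard ≤ s ∧
      ∀ w : EuclideanSpace ℝ (Fin k), {i | w i ≠ 0}.ncard ≤ s →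
        ‖(y - γ • gradient f y) - z‖ ≤ ‖(y - γ • gradient f y) - w‖})
    (x : EuclideanSpace ℝ (Fin k)) (hfix : x ∈ T x)
    (hcond : gradient f x = 0 ∨
      ∃ I : Finset (Fin k), I.card = s ∧ ∀ i ∈ I, ∀ j, γ * |gradient f x j| < |x i|) :
    T x = {x} := by
  set g : EuclideanSpace ℝ (Fin k) := gradient f x with hg
  set y : EuclideanSpace ℝ (Fin k) := x - γ • g with hy
  have hyi : ∀ i, y i = x i - γ * g i := by
    intro i; simp [hy, PiLp.sub_apply, PiLp.smul_apply, smul_eq_mul]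
  rw [hT] at hfix ⊢
  obtain ⟨hxs, hxmin⟩ := hfix
  apply Set.eq_singleton_iff_unique_mem.mpr
  refine ⟨⟨hxs, hxmin⟩, ?_⟩
  rintro z ⟨hzs, hzmin⟩
  have hzx : ‖y - z‖ ≤ ‖y - x‖ := hzmin x hxs
  -- the easy case: gradient zero
  have key0 : g = 0 → z = x := by
    intro h0
    have hyx : y = x := by rw [hy, h0, smul_zero, sub_zero]
    rw [hyx, sub_self, norm_zero] at hzx
    have : x - z = 0 := norm_le_zero_iff.mp hzx
    have := sub_eq_zero.mp this
    exact this.symm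
  rcases hcond with h0 | ⟨I, hIcard, hI⟩
  · exact key0 h0
  by_cases hgz : g = 0
  · exact key0 hgz
  -- g ≠ 0 : main argument
  obtain ⟨j₀, hj₀⟩ : ∃ j, g j ≠ 0 := by
    by_contra h; push_neg at h; exact hgz (PiLp.ext h)
  have hx0 : ∀ i ∈ I, x i ≠ 0 := by
    intro i hi
    have h := hI i hi j₀
    have : 0 < |x i| := lt_of_le_of_lt (by positivity) h
    exact abs_pos.mp this
  -- support of x is exactly I
  have hxoff : ∀ j, j ∉ I → x j = 0 := by
    intro j hj
    by_contra hxj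
    have hIsub : ↑(insert j I) ⊆ {i | x i ≠ 0} := by
      intro i hi
      simp only [Finset.coe_insert, Set.mem_insert_iff] at hi
      rcases hi with rfl | hi
      · exact hxj
      · exact hx0 i hi
    have hcard : (insert j I).card ≤ {i | x i ≠ 0}.ncard := by
      rw [← Set.ncard_coe_finset (insert j I)]
      exact Set.ncard_le_ncard hIsub (Set.toFinite _)
    rw [Finset.card_insert_of_notMem hj, hIcard] at hcard
    omega
  -- squared-norm comparison tool
  have sqle : ∀ a b : EuclideanSpace ℝ (Fin k), ‖a‖ ≤ ‖b‖ →
      ∑ i, (a i) ^ 2 ≤ ∑ i, (b i) ^ 2 := by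
    intro a b h
    have := pow_le_pow_left₀ (norm_nonneg a) h 2
    rwa [normsq_eq, normsq_eq] at this
  -- Step B : g vanishes on I
  have hgI : ∀ i ∈ I, g i = 0 := by
    intro i hi
    let w : EuclideanSpace ℝ (Fin k) := WithLp.toLp 2 (fun i => if i ∈ I then y i else 0)
    have hws : {i | w i ≠ 0}.ncard ≤ s := by
      have hsub : {i | w i ≠ 0} ⊆ ↑I := by
        intro i hi
        simp only [Set.mem_setOf_eq, w] at hi
        by_contra h
        exact hi (if_neg h)
      have := Set.ncard_le_ncard hsub (Set.toFinite _)
      simpa [Set.ncard_coe_finset, hIcard] using this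
    have h := sqle _ _ (hxmin w hws)
    rw [← Finset.sum_filter_add_sum_filter_not Finset.univ (· ∈ I),
        ← Finset.sum_filter_add_sum_filter_not Finset.univ (· ∈ I) (fun i => ((y - w) i)^2)] at h
    have e1 : ∀ i ∈ Finset.univ.filter (· ∈ I), ((y - x) i) ^ 2 = (γ * g i) ^ 2 := by
      intro i hi
      simp only [PiLp.sub_apply, hyi]
      ring
    have e2 : ∀ i ∈ Finset.univ.filter (· ∈ I), ((y - w) i) ^ 2 = 0 := by
      intro i hi
      simp only [Finset.mem_filter] at hi
      simp [PiLp.sub_apply, w, if_pos hi.2]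
    have e3 : ∀ i ∈ Finset.univ.filter (¬ · ∈ I), ((y - x) i) ^ 2 = ((y - w) i) ^ 2 := by
      intro i hi
      simp only [Finset.mem_filter] at hi
      simp [PiLp.sub_apply, w, if_neg hi.2, hxoff i hi.2]
    rw [Finset.sum_congr rfl e1, Finset.sum_congr rfl e2, Finset.sum_congr rfl e3,
        Finset.sum_const_zero, zero_add] at h
    have hsum : ∑ i ∈ Finset.univ.filter (· ∈ I), (γ * g i) ^ 2 ≤ 0 := by linarith
    have hterm : (γ * g i) ^ 2 = 0 := by
      have hnn : ∀ j ∈ Finset.univ.filter (· ∈ I), 0 ≤ (γ * g j) ^ 2 := fun j _ => sq_nonneg _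
      have := Finset.sum_eq_zero_iff_of_nonneg hnn |>.mp (le_antisymm hsum (Finset.sum_nonneg hnn))
      exact this i (by simp [hi])
    have := pow_eq_zero_iff (n := 2) (by norm_num) |>.mp hterm
    rcases mul_eq_zero.mp this with h | h
    · exact absurd h (ne_of_gt hγ)
    · exact h
  have hyI : ∀ i ∈ I, y i = x i := by
    intro i hi; rw [hyi, hgI i hi]; ring
  have hyoff : ∀ j, j ∉ I → y j = -(γ * g j) := by
    intro j hj; rw [hyi, hxoff j hj]; ring
  -- key strict comparison of entries
  have hkey : ∀ i ∈ I, ∀ j, j ∉ I → (y j) ^ 2 < (y i) ^ 2 := by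
    intro i hi j hj
    have h1 : |y j| < |y i| := by
      rw [hyoff j hj, hyI i hi, abs_neg, abs_mul, abs_of_pos hγ]
      exact hI i hi j
    calc (y j) ^ 2 = |y j| ^ 2 := (sq_abs _).symm
      _ < |y i| ^ 2 := by
          apply pow_lt_pow_left₀ h1 (abs_nonneg _)
          norm_num
      _ = (y i) ^ 2 := sq_abs _
  -- support of z
  set S : Finset (Fin k) := Finset.univ.filter (fun i => z i ≠ 0) with hS
  have hScard : S.card ≤ s := by
    have : {i | z i ≠ 0} = ↑S := by ext i; simp [hS]
    rw [this, Set.ncard_coe_finset] at hzs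
    exact hzs
  have hzoff : ∀ j, j ∉ S → z j = 0 := by
    intro j hj
    by_contra h
    exact hj (by simp [hS, h])
  -- sum comparison after squaring
  have hsq := sqle _ _ hzx
  have hL : ∑ i ∈ Sᶜ, (y i) ^ 2 ≤ ∑ i, ((y - z) i) ^ 2 := by
    rw [← Finset.sum_add_sum_compl S (fun i => ((y - z) i) ^ 2)]
    have : ∑ i ∈ Sᶜ, (y i) ^ 2 = ∑ i ∈ Sᶜ, ((y - z) i) ^ 2 := by
      apply Finset.sum_congr rfl
      intro i hi
      rw [PiLp.sub_apply (x := y) (y := z), hzoff i (Finset.mem_compl.mp hi), sub_zero]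
    rw [this]
    have : 0 ≤ ∑ i ∈ S, ((y - z) i) ^ 2 := Finset.sum_nonneg fun _ _ => sq_nonneg _
    linarith
  have hR : ∑ i, ((y - x) i) ^ 2 = ∑ j ∈ Iᶜ, (y j) ^ 2 := by
    rw [← Finset.sum_add_sum_compl I (fun i => ((y - x) i) ^ 2)]
    have h1 : ∑ i ∈ I, ((y - x) i) ^ 2 = 0 := by
      apply Finset.sum_eq_zero
      intro i hi
      rw [PiLp.sub_apply, hyI i hi, sub_self]
      ring
    have h2 : ∑ j ∈ Iᶜ, ((y - x) j) ^ 2 = ∑ j ∈ Iᶜ, (y j) ^ 2 := by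
      apply Finset.sum_congr rfl
      intro j hj
      rw [PiLp.sub_apply, hxoff j (Finset.mem_compl.mp hj), sub_zero]
    rw [h1, h2, zero_add]
  have hmain : ∑ i ∈ Sᶜ, (y i) ^ 2 ≤ ∑ j ∈ Iᶜ, (y j) ^ 2 := by
    calc ∑ i ∈ Sᶜ, (y i) ^ 2 ≤ ∑ i, ((y - z) i) ^ 2 := hL
      _ ≤ ∑ i, ((y - x) i) ^ 2 := hsq
      _ = ∑ j ∈ Iᶜ, (y j) ^ 2 := hR
  -- strip the common part : ∑_{I\S} ≤ ∑_{S\I}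
  have split1 : ∑ i ∈ Sᶜ, (y i) ^ 2 = ∑ i ∈ I \ S, (y i) ^ 2 + ∑ i ∈ Sᶜ \ I, (y i) ^ 2 := by
    rw [← Finset.sum_filter_add_sum_filter_not Sᶜ (· ∈ I)]
    congr 1
    · apply Finset.sum_congr _ (fun _ _ => rfl)
      ext i; simp [Finset.mem_sdiff, Finset.mem_compl, and_comm]
    · apply Finset.sum_congr _ (fun _ _ => rfl)
      ext i; simp [Finset.mem_sdiff, Finset.mem_compl]
  have split2 : ∑ j ∈ Iᶜ, (y j) ^ 2 = ∑ j ∈ S \ I, (y j) ^ 2 + ∑ j ∈ Iᶜ \ S, (y j) ^ 2 := by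
    rw [← Finset.sum_filter_add_sum_filter_not Iᶜ (· ∈ S)]
    congr 1
    · apply Finset.sum_congr _ (fun _ _ => rfl)
      ext i; simp [Finset.mem_sdiff, Finset.mem_compl, and_comm]
    · apply Finset.sum_congr _ (fun _ _ => rfl)
      ext i; simp [Finset.mem_sdiff, Finset.mem_compl]
  have hcommon : ∑ i ∈ Sᶜ \ I, (y i) ^ 2 = ∑ i ∈ Iᶜ \ S, (y i) ^ 2 := by
    apply Finset.sum_congr _ (fun _ _ => rfl)
    ext i; simp [Finset.mem_sdiff, Finset.mem_compl, and_comm]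
  have hstrip : ∑ i ∈ I \ S, (y i) ^ 2 ≤ ∑ j ∈ S \ I, (y j) ^ 2 := by
    rw [split1, split2, hcommon] at hmain
    linarith
  -- cardinality : |S \ I| ≤ |I \ S|
  have hcards : (S \ I).card ≤ (I \ S).card := by
    have h1 := Finset.card_sdiff_add_card_inter S I
    have h2 := Finset.card_sdiff_add_card_inter I S
    rw [Finset.inter_comm] at h2
    omega
  -- I ⊆ S
  have hIS : I ⊆ S := by
    by_contra hns
    obtain ⟨i₀, hi₀I, hi₀S⟩ := Finset.not_subset.mp hns
    have hi₀ : i₀ ∈ I \ S := Finset.mem_sdiff.mpr ⟨hi₀I, hi₀S⟩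
    -- min of y² over I \ S
    obtain ⟨i₁, hi₁, hmin⟩ := Finset.exists_min_image (I \ S) (fun i => (y i) ^ 2) ⟨i₀, hi₀⟩
    have hi₁I : i₁ ∈ I := (Finset.mem_sdiff.mp hi₁).1
    have hm_pos : 0 < (y i₁) ^ 2 := by
      have := hkey i₁ hi₁I j₀ -- need j₀ ∉ I? no. use x i₁ ≠ 0
      have hx : x i₁ ≠ 0 := hx0 i₁ hi₁I
      have : y i₁ = x i₁ := hyI i₁ hi₁I
      rw [this]
      positivity
    have hub : ∀ j ∈ S \ I, (y j) ^ 2 < (y i₁) ^ 2 := by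
      intro j hj
      exact hkey i₁ hi₁I j (Finset.mem_sdiff.mp hj).2
    have hlt : ∑ j ∈ S \ I, (y j) ^ 2 < ∑ i ∈ I \ S, (y i) ^ 2 := by
      rcases Finset.eq_empty_or_nonempty (S \ I) with he | hne
      · rw [he, Finset.sum_empty]
        calc (0:ℝ) < (y i₁) ^ 2 := hm_pos
          _ ≤ ∑ i ∈ I \ S, (y i) ^ 2 :=
              Finset.single_le_sum (fun i _ => sq_nonneg (y i)) hi₁
      · calc ∑ j ∈ S \ I, (y j) ^ 2 < ∑ _j ∈ S \ I, (y i₁) ^ 2 :=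
              Finset.sum_lt_sum_of_nonempty hne hub
          _ = (S \ I).card • (y i₁) ^ 2 := by rw [Finset.sum_const]
          _ ≤ (I \ S).card • (y i₁) ^ 2 := by
              apply nsmul_le_nsmul_left (le_of_lt hm_pos) hcards
          _ = ∑ _i ∈ I \ S, (y i₁) ^ 2 := by rw [Finset.sum_const]
          _ ≤ ∑ i ∈ I \ S, (y i) ^ 2 := Finset.sum_le_sum hmin
    linarith
  have hSI : S = I := (Finset.eq_of_subset_of_card_le hIS (by omega)).symm
  -- conclude z = x
  have hfin : ∑ i ∈ I, ((y - z) i) ^ 2 ≤ 0 := by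
    have e : ∑ i, ((y - z) i) ^ 2 = ∑ i ∈ I, ((y - z) i) ^ 2 + ∑ j ∈ Iᶜ, (y j) ^ 2 := by
      rw [← Finset.sum_add_sum_compl I (fun i => ((y - z) i) ^ 2)]
      congr 1
      apply Finset.sum_congr rfl
      intro j hj
      rw [PiLp.sub_apply, hzoff j (by rw [hSI]; exact Finset.mem_compl.mp hj), sub_zero]
    rw [e, hR] at hsq
    linarith
  have hzI : ∀ i ∈ I, z i = x i := by
    intro i hi
    have hnn : ∀ j ∈ I, 0 ≤ ((y - z) j) ^ 2 := fun _ _ => sq_nonneg _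
    have h0 := Finset.sum_eq_zero_iff_of_nonneg hnn |>.mp
      (le_antisymm hfin (Finset.sum_nonneg hnn)) i hi
    have := pow_eq_zero_iff (n := 2) (by norm_num) |>.mp h0
    rw [PiLp.sub_apply] at this
    have := sub_eq_zero.mp this
    rw [← this, hyI i hi]
  ext i
  by_cases hi : i ∈ I
  · exact hzI i hi
  · rw [hzoff i (by rw [hSI]; exact hi), hxoff i hi]
end
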